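/- arXiv:1508.03586 — 6 statements merged into one kernel-verified Lean document; each statement's English description precedes it below -/
import Mathlib

section
/- Consider a chain of complex vector spaces ℂ^{n_1}, …, ℂ^{n_r} with linear maps α_i : ℂ^{n_i} → ℂ^{n_{i+1}} and β_i : ℂ^{n_{i+1}} → ℂ^{n_i} for 1 ≤ i ≤ r−1, and nonzero scalars q_2, …, q_r ∈ ℂ satisfying the multiplicative quiver equations 1 + β_{i+1}α_{i+1} = q_{i+1}(1 + α_i β_i) for 0 ≤ i ≤ r−2 (where α_0 β_0 is interpreted as 0). Define X_k = α_{r-1}α_{r-2}⋯α_{r-k} β_{r-k}⋯β_{r-2}β_{r-1} ∈ End(ℂ^{n_r}) for 1 ≤ k ≤ r−1, X = X_1, and X_r = 0. Then for each 1 ≤ k ≤ r−1: X_k · X = (q_{r-1}⋯q_{r-k} − 1)·X_k + q_{r-1}⋯q_{r-k}·X_{k+1}. -/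
/- We index the chain of vector spaces from the top: `V 0` corresponds to `ℂ^{n_r}`,
and in general `V j` corresponds to `ℂ^{n_{r-j}}`.  Thus `a j : V (j+1) →ₗ V j`
corresponds to `α_{r-1-j}` and `b j : V j →ₗ V (j+1)` corresponds to `β_{r-1-j}`,
while the scalar `p j` corresponds to `q_{r-1-j}`.  The multiplicative quiver
equations `1 + β_{i+1} α_{i+1} = q_{i+1} (1 + α_i β_i)` (for `0 ≤ i ≤ r-2`, with
`α_0 β_0 = 0`) become, for `j = r-2-i`:
`1 + b j ∘ a j = p j • (1 + a (j+1) ∘ b (j+1))` for `j < r-2`, together with the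
boundary equation `1 + b (r-2) ∘ a (r-2) = p (r-2) • 1`. -/

/-- `Acomp a k = α_{r-1} ∘ ⋯ ∘ α_{r-k} : ℂ^{n_{r-k}} → ℂ^{n_r}` in reversed indexing. -/
def Acomp {V : ℕ → Type*} [∀ i, AddCommGroup (V i)] [∀ i, Module ℂ (V i)]
    (a : ∀ j, V (j + 1) →ₗ[ℂ] V j) : (k : ℕ) → (V k →ₗ[ℂ] V 0)
  | 0 => LinearMap.id
  | (k + 1) => (Acomp a k) ∘ₗ (a k)

/-- `Bcomp b k = β_{r-k} ∘ ⋯ ∘ β_{r-1} : ℂ^{n_r} → ℂ^{n_{r-k}}` in reversed indexing. -/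
def Bcomp {V : ℕ → Type*} [∀ i, AddCommGroup (V i)] [∀ i, Module ℂ (V i)]
    (b : ∀ j, V j →ₗ[ℂ] V (j + 1)) : (k : ℕ) → (V 0 →ₗ[ℂ] V k)
  | 0 => LinearMap.id
  | (k + 1) => (b k) ∘ₗ (Bcomp b k)

/-- `Xk a b r k = X_k = α_{r-1} ⋯ α_{r-k} β_{r-k} ⋯ β_{r-1} ∈ End(ℂ^{n_r})`
for `k ≤ r - 1`, with the convention `X_r = 0`. -/
noncomputable def Xk {V : ℕ → Type*} [∀ i, AddCommGroup (V i)] [∀ i, Module ℂ (V i)]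
    (a : ∀ j, V (j + 1) →ₗ[ℂ] V j) (b : ∀ j, V j →ₗ[ℂ] V (j + 1)) (r k : ℕ) :
    Module.End ℂ (V 0) :=
  if k = r then 0 else (Acomp a k) ∘ₗ (Bcomp b k)

/-- The recursion `X_k X = (q_{r-1}⋯q_{r-k} − 1) X_k + q_{r-1}⋯q_{r-k} X_{k+1}`
for `1 ≤ k ≤ r-1`, where `q_{r-1}⋯q_{r-k} = ∏_{j<k} p j`. -/
theorem Xk_mul_X (V : ℕ → Type*) [∀ i, AddCommGroup (V i)] [∀ i, Module ℂ (V i)]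
    (r : ℕ) (hr : 2 ≤ r)
    (a : ∀ j, V (j + 1) →ₗ[ℂ] V j) (b : ∀ j, V j →ₗ[ℂ] V (j + 1))
    (p : ℕ → ℂ) (hp : ∀ j, p j ≠ 0)
    (heq : ∀ j, j < r - 2 →
      (1 : Module.End ℂ (V (j + 1))) + (b j) ∘ₗ (a j)
        = p j • ((1 : Module.End ℂ (V (j + 1))) + (a (j + 1)) ∘ₗ (b (j + 1))))
    (hbound : (1 : Module.End ℂ (V ((r - 2) + 1))) + (b (r - 2)) ∘ₗ (a (r - 2))
        = p (r - 2) • (1 : Module.End ℂ (V ((r - 2) + 1)))) :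
    ∀ k, 1 ≤ k → k ≤ r - 1 →
      (Xk a b r k) * (Xk a b r 1)
        = ((∏ j ∈ Finset.range k, p j) - 1) • Xk a b r k
            + (∏ j ∈ Finset.range k, p j) • Xk a b r (k + 1) := by

  -- Key lemma: pushing `a 0 ∘ b 0` through `Bcomp b k`, for `1 ≤ k ≤ r-2`.
  have key : ∀ k, 1 ≤ k → k ≤ r - 2 →
      (Bcomp b k) ∘ₗ ((a 0) ∘ₗ (b 0))
        = ((∏ j ∈ Finset.range k, p j) - 1) • Bcomp b k
            + (∏ j ∈ Finset.range k, p j) • ((a k) ∘ₗ Bcomp b (k + 1)) := by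
    intro k
    induction k with
    | zero => omega
    | succ n ih =>
      intro _ hle
      rcases Nat.eq_zero_or_pos n with rfl | hn
      · -- base case k = 1
        have h0 : 0 < r - 2 := by omega
        have h := heq 0 h0
        ext v
        have h' := DFunLike.congr_fun h (b 0 v)
        simp only [LinearMap.add_apply, LinearMap.smul_apply, Module.End.one_apply,
          LinearMap.comp_apply] at h'
        simp only [Bcomp, LinearMap.comp_apply, LinearMap.id_apply, LinearMap.add_apply,
          LinearMap.smul_apply, Finset.prod_range_succ, Finset.prod_range_zero, one_mul]
        linear_combination (norm := module) h'
      · -- inductive step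
        have ihn := ih hn (by omega)
        have h := heq n (by omega)
        ext v
        have ih' := DFunLike.congr_fun ihn v
        have h' := DFunLike.congr_fun h ((Bcomp b (n + 1)) v)
        simp only [LinearMap.add_apply, LinearMap.smul_apply, Module.End.one_apply,
          LinearMap.comp_apply] at h' ih'
        simp only [Bcomp, LinearMap.comp_apply, LinearMap.add_apply, LinearMap.smul_apply,
          Finset.prod_range_succ] at h' ih' ⊢
        rw [ih', map_add, map_smul, map_smul]
        linear_combination (norm := module) (∏ j ∈ Finset.range n, p j) • h'
  -- Boundary version for k = r - 1.
  have key2 : (Bcomp b (r - 1)) ∘ₗ ((a 0) ∘ₗ (b 0))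
      = ((∏ j ∈ Finset.range (r - 1), p j) - 1) • Bcomp b (r - 1) := by
    rcases eq_or_lt_of_le hr with hr2 | hr3
    · -- r = 2, so r - 1 = 1 and r - 2 = 0
      subst hr2
      have h := hbound
      ext v
      have h' := DFunLike.congr_fun h (b 0 v)
      simp only [LinearMap.add_apply, LinearMap.smul_apply, Module.End.one_apply,
        LinearMap.comp_apply] at h'
      simp only [show (2:ℕ) - 1 = 1 from rfl, Bcomp, LinearMap.comp_apply,
        LinearMap.id_apply, LinearMap.smul_apply, Finset.prod_range_succ,
        Finset.prod_range_zero, one_mul]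
      linear_combination (norm := module) h'
    · -- r ≥ 3
      have hk := key (r - 2) (by omega) le_rfl
      have hrw : r - 1 = (r - 2) + 1 := by omega
      rw [hrw]
      ext v
      have ih' := DFunLike.congr_fun hk v
      have h' := DFunLike.congr_fun hbound ((Bcomp b ((r - 2) + 1)) v)
      simp only [LinearMap.add_apply, LinearMap.smul_apply, Module.End.one_apply,
        LinearMap.comp_apply] at h' ih'
      simp only [Bcomp, LinearMap.comp_apply, LinearMap.smul_apply, LinearMap.add_apply,
        Finset.prod_range_succ] at ih' h' ⊢
      rw [ih', map_add, map_smul, map_smul]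
      linear_combination (norm := module) (∏ j ∈ Finset.range (r - 2), p j) • h'
  -- Main statement.
  intro k hk1 hk2
  have hX1 : Xk a b r 1 = (Acomp a 1) ∘ₗ (Bcomp b 1) := by
    simp [Xk, show (1:ℕ) ≠ r by omega]
  rcases eq_or_lt_of_le hk2 with hke | hklt
  · -- k = r - 1 : here Xk a b r (k+1) = 0
    have hk1r : k + 1 = r := by omega
    have hXk : Xk a b r k = (Acomp a k) ∘ₗ (Bcomp b k) := by
      simp [Xk, show k ≠ r by omega]
    have hXk1 : Xk a b r (k + 1) = 0 := by simp [Xk, hk1r]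
    rw [hXk, hXk1, hX1, smul_zero, add_zero]
    have : (Acomp a k ∘ₗ Bcomp b k) * (Acomp a 1 ∘ₗ Bcomp b 1)
        = Acomp a k ∘ₗ ((Bcomp b k) ∘ₗ ((a 0) ∘ₗ (b 0))) := by
      simp only [Module.End.mul_eq_comp, Acomp, Bcomp]
      ext v; simp [LinearMap.comp_apply]
    rw [this, hke, key2]
    ext v
    simp [LinearMap.comp_apply, map_smul]
  · -- k ≤ r - 2
    have hkk : k ≤ r - 2 := by omega
    have hXk : Xk a b r k = (Acomp a k) ∘ₗ (Bcomp b k) := by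
      simp [Xk, show k ≠ r by omega]
    have hXk1 : Xk a b r (k + 1) = (Acomp a (k + 1)) ∘ₗ (Bcomp b (k + 1)) := by
      simp [Xk, show k + 1 ≠ r by omega]
    rw [hXk, hXk1, hX1]
    have : (Acomp a k ∘ₗ Bcomp b k) * (Acomp a 1 ∘ₗ Bcomp b 1)
        = Acomp a k ∘ₗ ((Bcomp b k) ∘ₗ ((a 0) ∘ₗ (b 0))) := by
      simp only [Module.End.mul_eq_comp, Acomp, Bcomp]
      ext v; simp [LinearMap.comp_apply]
    rw [this, key k hk1 hkk]
    ext v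
    simp only [Acomp, LinearMap.comp_apply, LinearMap.add_apply, LinearMap.smul_apply,
      map_add, map_smul]
end

section
/- With the hypotheses of the multiplicative quiver equations (1 + β_{i+1}α_{i+1} = q_{i+1}(1 + α_i β_i), α_0β_0 = 0, all q_i nonzero), the endomorphism Y = 1 + α_{r-1}β_{r-1} ∈ End(ℂ^{n_r}) satisfies the polynomial equation (Y − 1)(Y − q_{r-1})(Y − q_{r-1}q_{r-2})⋯(Y − q_{r-1}⋯q_1) = 0. -/
open Module LinearMap

section helpers
variable {V W : Type*} [AddCommGroup V] [Module ℂ V] [AddCommGroup W] [Module ℂ W]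

lemma swap1 (a : W →ₗ[ℂ] V) (b : V →ₗ[ℂ] W) (c : ℂ) :
    ((1 + a ∘ₗ b : Module.End ℂ V) - c • 1) ∘ₗ a
      = a ∘ₗ ((1 + b ∘ₗ a : Module.End ℂ W) - c • 1) := by
  ext x; simp

lemma push (a : W →ₗ[ℂ] V) (b : V →ₗ[ℂ] W) (l : List ℂ) :
    ((l.map (fun c => (1 + a ∘ₗ b : Module.End ℂ V) - c • 1)).prod) ∘ₗ a
      = a ∘ₗ (l.map (fun c => (1 + b ∘ₗ a : Module.End ℂ W) - c • 1)).prod := by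
  induction l with
  | nil => ext x; simp
  | cons c l ih =>
      simp only [List.map_cons, List.prod_cons, Module.End.mul_eq_comp, comp_assoc, ih]
      rw [← comp_assoc, ← comp_assoc, swap1]

lemma comm_smul_one (Y : Module.End ℂ V) (c : ℂ) : Commute Y (c • (1 : Module.End ℂ V)) :=
  (Commute.one_right Y).smul_right c

lemma comm_factors (Y : Module.End ℂ V) (c d : ℂ) :
    Commute (Y - c • 1) (Y - d • 1) :=
  ((Commute.refl Y).sub_right (comm_smul_one Y d)).sub_left
    (((comm_smul_one Y c).symm).sub_right
      (Commute.smul_right (Commute.smul_left (Commute.refl 1) c) d))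

lemma step (a : W →ₗ[ℂ] V) (b : V →ₗ[ℂ] W) (l : List ℂ)
    (h : (l.map (fun c => (1 + b ∘ₗ a : Module.End ℂ W) - c • 1)).prod = 0) :
    (((1 : ℂ) :: l).map (fun c => (1 + a ∘ₗ b : Module.End ℂ V) - c • 1)).prod = 0 := by
  set Y : Module.End ℂ V := 1 + a ∘ₗ b with hY
  have hc : Commute (Y - (1:ℂ) • 1) ((l.map (fun c => Y - c • 1)).prod) := by
    apply Commute.list_prod_right
    intro y hy
    obtain ⟨c, -, rfl⟩ := List.mem_map.1 hy
    exact comm_factors Y 1 c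
  rw [List.map_cons, List.prod_cons, hc.eq]
  have h1 : Y - (1:ℂ) • 1 = a ∘ₗ b := by simp [hY]
  rw [h1, Module.End.mul_eq_comp, ← comp_assoc, push a b l, h]
  ext x; simp

lemma prod_map_smul (c : ℂ) (l : List (Module.End ℂ V)) :
    (l.map (fun x => c • x)).prod = c ^ l.length • l.prod := by
  induction l with
  | nil => simp
  | cons x l ih => simp [ih, smul_mul_smul_comm, pow_succ, mul_comm, smul_smul]

end helpers

theorem Y_satisfies_polynomial (V : ℕ → Type*) [∀ i, AddCommGroup (V i)] [∀ i, Module ℂ (V i)]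
    (r : ℕ) (hr : 2 ≤ r)
    (a : ∀ j, V (j + 1) →ₗ[ℂ] V j) (b : ∀ j, V j →ₗ[ℂ] V (j + 1))
    (p : ℕ → ℂ) (hp : ∀ j, p j ≠ 0)
    (heq : ∀ j, j < r - 2 →
      (1 : Module.End ℂ (V (j + 1))) + (b j) ∘ₗ (a j)
        = p j • ((1 : Module.End ℂ (V (j + 1))) + (a (j + 1)) ∘ₗ (b (j + 1))))
    (hbound : (1 : Module.End ℂ (V ((r - 2) + 1))) + (b (r - 2)) ∘ₗ (a (r - 2))
        = p (r - 2) • (1 : Module.End ℂ (V ((r - 2) + 1)))) :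
    ((List.range r).map (fun k =>
        ((1 : Module.End ℂ (V 0)) + (a 0) ∘ₗ (b 0))
          - (∏ j ∈ Finset.range k, p j) • (1 : Module.End ℂ (V 0)))).prod = 0 := by
  have key : ∀ n j, j + n = r - 2 →
      ((List.range (n + 1)).map (fun k =>
        ((1 : Module.End ℂ (V (j + 1))) + (b j) ∘ₗ (a j))
          - (∏ i ∈ Finset.Icc j (j + k), p i) • 1)).prod = 0 := by
    intro n
    induction n with
    | zero =>
        intro j hj
        have : j = r - 2 := by omega
        subst this
        simp [hbound, List.range_succ, Finset.Icc_self]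
    | succ n ih =>
        intro j hj
        have hjlt : j < r - 2 := by omega
        have hEq := heq j hjlt
        set Y' : Module.End ℂ (V (j + 1)) := 1 + (a (j + 1)) ∘ₗ (b (j + 1)) with hY'
        have hfac : ∀ k, ((1 : Module.End ℂ (V (j + 1))) + (b j) ∘ₗ (a j))
              - (∏ i ∈ Finset.Icc j (j + k), p i) • 1
            = p j • (Y' - (∏ i ∈ Finset.Icc (j + 1) (j + k), p i) • 1) := by
          intro k
          rw [hEq, Finset.Icc_eq_cons_Ioc (Nat.le_add_right j k), Finset.prod_cons,
            ← Finset.Icc_add_one_left_eq_Ioc]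
          simp [smul_sub, smul_smul, Nat.succ_eq_add_one, hY']
        have hlist : (List.range (n + 1 + 1)).map (fun k =>
              ((1 : Module.End ℂ (V (j + 1))) + (b j) ∘ₗ (a j))
                - (∏ i ∈ Finset.Icc j (j + k), p i) • 1)
            = ((List.range (n + 1 + 1)).map (fun k =>
                Y' - (∏ i ∈ Finset.Icc (j + 1) (j + k), p i) • 1)).map (fun x => p j • x) := by
          rw [List.map_map]
          exact List.map_congr_left (fun k _ => hfac k)
        rw [hlist, prod_map_smul]
        have hinner : ((List.range (n + 1 + 1)).map (fun k =>
            Y' - (∏ i ∈ Finset.Icc (j + 1) (j + k), p i) • 1)).prod = 0 := by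
          have hL : (List.range (n + 1 + 1)).map (fun k =>
                Y' - (∏ i ∈ Finset.Icc (j + 1) (j + k), p i) • 1)
              = (((1 : ℂ) :: ((List.range (n + 1)).map
                  (fun k => ∏ i ∈ Finset.Icc (j + 1) (j + 1 + k), p i))).map
                  (fun c => Y' - c • 1)) := by
            rw [List.range_succ_eq_map, List.map_cons, List.map_cons, List.map_map, List.map_map]
            congr 1
            · rw [Finset.Icc_eq_empty (by omega)]
              simp
            · refine List.map_congr_left (fun k _ => ?_)
              have hik : j + (k + 1) = j + 1 + k := by omega
              simp [Function.comp, hik]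
          rw [hL]
          refine step (a (j + 1)) (b (j + 1)) _ ?_
          have := ih (j + 1) (by omega)
          rw [List.map_map]
          convert this using 2
          rfl
        rw [hinner, smul_zero]
  -- final assembly
  obtain ⟨m, rfl⟩ : ∃ m, r = m + 2 := ⟨r - 2, by omega⟩
  have hkey := key m 0 (by omega)
  have hL : (List.range (m + 2)).map (fun k =>
        ((1 : Module.End ℂ (V 0)) + (a 0) ∘ₗ (b 0))
          - (∏ j ∈ Finset.range k, p j) • 1)
      = (((1 : ℂ) :: ((List.range (m + 1)).map (fun k => ∏ i ∈ Finset.Icc 0 k, p i))).map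
          (fun c => ((1 : Module.End ℂ (V 0)) + (a 0) ∘ₗ (b 0)) - c • 1)) := by
    rw [show m + 2 = (m + 1) + 1 by rfl, List.range_succ_eq_map, List.map_cons, List.map_cons,
      List.map_map, List.map_map]
    congr 1
    refine List.map_congr_left (fun k _ => ?_)
    simp only [Function.comp, Nat.succ_eq_add_one]
    rw [Finset.range_eq_Ico, Finset.Ico_add_one_right_eq_Icc]
  rw [hL]
  refine step (a 0) (b 0) _ ?_
  rw [List.map_map]
  convert hkey using 2
  refine List.map_congr_left (fun k _ => ?_)
  simp [Function.comp]
end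

section
/- Suppose the multiplicative quiver equations 1 + β_i α_i = q_i (1 + α_{i-1} β_{i-1}) hold with all q_i nonzero. Then for every i, every τ ∈ ℂ, and every m ≥ 1, the map α_i sends the generalised eigenspace ker(1 + α_{i-1}β_{i-1} − τ q_i^{-1})^m into ker(1 + α_i β_i − τ)^m, and β_i sends ker(1 + α_i β_i − τ)^m into ker(1 + α_{i-1}β_{i-1} − τ q_i^{-1})^m. -/
/-- The quiver maps preserve generalised eigenspaces: with the multiplicative quiver
equation `1 + β α = q • (1 + αprev βprev)` in `End V` (where `αprev = α_{i-1} : U → V`,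
`βprev = β_{i-1} : V → U`, `α = α_i : V → W`, `β = β_i : W → V`, `q ≠ 0`), for every
`τ ∈ ℂ` and `m ≥ 1` the map `α` sends `ker (1 + αprev βprev − τ q⁻¹)^m` into
`ker (1 + α β − τ)^m`, and `β` sends `ker (1 + α β − τ)^m` into
`ker (1 + αprev βprev − τ q⁻¹)^m`. -/
theorem mult_quiver_maps_generalised_eigenspaces
    (U V W : Type*) [AddCommGroup U] [Module ℂ U] [AddCommGroup V] [Module ℂ V]
    [AddCommGroup W] [Module ℂ W]
    (αprev : U →ₗ[ℂ] V) (βprev : V →ₗ[ℂ] U) (α : V →ₗ[ℂ] W) (β : W →ₗ[ℂ] V)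
    (q : ℂ) (hq : q ≠ 0)
    (heq : (1 : Module.End ℂ V) + β ∘ₗ α
      = q • ((1 : Module.End ℂ V) + αprev ∘ₗ βprev)) (τ : ℂ) (m : ℕ) (hm : 1 ≤ m) :
    (∀ v ∈ LinearMap.ker (((1 : Module.End ℂ V) + αprev ∘ₗ βprev - (τ * q⁻¹) • 1) ^ m),
        α v ∈ LinearMap.ker (((1 : Module.End ℂ W) + α ∘ₗ β - τ • 1) ^ m)) ∧
    (∀ w ∈ LinearMap.ker (((1 : Module.End ℂ W) + α ∘ₗ β - τ • 1) ^ m),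
        β w ∈ LinearMap.ker (((1 : Module.End ℂ V) + αprev ∘ₗ βprev - (τ * q⁻¹) • 1) ^ m)) := by
  obtain ⟨t, rfl⟩ : ∃ t, τ = q * t := ⟨τ * q⁻¹, by field_simp⟩
  have ht : q * t * q⁻¹ = t := by field_simp
  rw [ht]
  set A : Module.End ℂ W := (1 : Module.End ℂ W) + α ∘ₗ β - (q * t) • 1 with hA
  set C : Module.End ℂ V := (1 : Module.End ℂ V) + αprev ∘ₗ βprev - t • 1 with hC
  have hpt : ∀ v : V, v + β (α v) = q • v + q • αprev (βprev v) := by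
    intro v
    have h := LinearMap.congr_fun heq v
    simpa [smul_add] using h
  have key1 : A ∘ₗ α = q • (α ∘ₗ C) := by
    ext v
    have h := hpt v
    have h2 : β (α v) = q • v + q • αprev (βprev v) - v := by
      rw [← h]; abel
    simp only [hA, hC, LinearMap.comp_apply, LinearMap.smul_apply, LinearMap.sub_apply,
      LinearMap.add_apply, Module.End.one_apply, map_add, map_sub, map_smul]
    rw [h2]
    simp only [map_add, map_sub, map_smul, smul_add, smul_sub, smul_smul]
    module
  have key2 : β ∘ₗ A = q • (C ∘ₗ β) := by
    ext w
    have h2 : β (α (β w)) = q • β w + q • αprev (βprev (β w)) - β w := by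
      rw [← hpt (β w)]; abel
    simp only [hA, hC, LinearMap.comp_apply, LinearMap.smul_apply, LinearMap.sub_apply,
      LinearMap.add_apply, Module.End.one_apply, map_add, map_sub, map_smul]
    rw [h2]
    simp only [smul_add, smul_sub, smul_smul]
    module
  have ind1 : ∀ n : ℕ, (A ^ n) ∘ₗ α = q ^ n • (α ∘ₗ C ^ n) := by
    intro n
    induction n with
    | zero => ext x; simp [Module.End.one_apply]
    | succ n ih =>
      rw [pow_succ' A n, pow_succ C n, Module.End.mul_eq_comp, Module.End.mul_eq_comp,
        LinearMap.comp_assoc, ih, LinearMap.comp_smul, ← LinearMap.comp_assoc, key1,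
        LinearMap.smul_comp, LinearMap.comp_assoc, smul_smul, pow_succ]
      ring_nf
      rw [show C ∘ₗ C ^ n = (C ^ n) ∘ₗ C from by
        rw [← Module.End.mul_eq_comp, ← Module.End.mul_eq_comp, ← pow_succ, ← pow_succ']]
  have ind2 : ∀ n : ℕ, β ∘ₗ (A ^ n) = q ^ n • ((C ^ n) ∘ₗ β) := by
    intro n
    induction n with
    | zero => ext x; simp [Module.End.one_apply]
    | succ n ih =>
      rw [pow_succ A n, pow_succ' C n, Module.End.mul_eq_comp, Module.End.mul_eq_comp,
        ← LinearMap.comp_assoc, ih, LinearMap.smul_comp, LinearMap.comp_assoc, key2,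
        LinearMap.comp_smul, ← LinearMap.comp_assoc, smul_smul, pow_succ]
      ring_nf
      rw [show (C ^ n) ∘ₗ C = C ∘ₗ C ^ n from by
        rw [← Module.End.mul_eq_comp, ← Module.End.mul_eq_comp, ← pow_succ, ← pow_succ']]
  constructor
  · intro v hv
    rw [LinearMap.mem_ker] at hv ⊢
    have := LinearMap.congr_fun (ind1 m) v
    simp only [LinearMap.comp_apply, LinearMap.smul_apply, hv, map_zero, smul_zero] at this
    exact this
  · intro w hw
    rw [LinearMap.mem_ker] at hw ⊢
    have := LinearMap.congr_fun (ind2 m) w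
    simp only [LinearMap.comp_apply, LinearMap.smul_apply] at this
    rw [hw] at this
    have h0 : q ^ m • (C ^ m) (β w) = 0 := by simpa using this.symm
    rcases smul_eq_zero.mp h0 with h | h
    · exact absurd h (pow_ne_zero m hq)
    · exact h
end

section
/- For a full-flag toric multiplicative quiver, where α_k : ℂ^k → ℂ^{k+1} has entries (α_k)_{jj} = ν_j^k for 1 ≤ j ≤ k and zeros elsewhere, and β_k : ℂ^{k+1} → ℂ^k has entries (β_k)_{jj} = μ_j^k and zeros elsewhere, the multiplicative quiver equations 1 + β_{i+1}α_{i+1} = q_{i+1}(1 + α_i β_i) (with α_0β_0 = 0) hold if and only if μ_j^i ν_j^i = q_i q_{i-1} ⋯ q_j − 1 for all 1 ≤ j ≤ i ≤ r−1. -/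
/-- The toric map `α_k : ℂ^k → ℂ^{k+1}`, a `(k+1) × k` matrix with diagonal entries
`ν k 0, …, ν k (k-1)` (corresponding to `ν_1^k, …, ν_k^k`) and zeros elsewhere. -/
def toricAlpha (ν : ℕ → ℕ → ℂ) (k : ℕ) : Matrix (Fin (k + 1)) (Fin k) ℂ :=
  fun i j => if (i : ℕ) = (j : ℕ) then ν k j else 0

/-- The toric map `β_k : ℂ^{k+1} → ℂ^k`, a `k × (k+1)` matrix with diagonal entries
`μ k 0, …, μ k (k-1)` (corresponding to `μ_1^k, …, μ_k^k`) and zeros elsewhere. -/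
def toricBeta (μ : ℕ → ℕ → ℂ) (k : ℕ) : Matrix (Fin k) (Fin (k + 1)) ℂ :=
  fun i j => if (i : ℕ) = (j : ℕ) then μ k i else 0

lemma entryBA (μ ν : ℕ → ℕ → ℂ) (k : ℕ) (a b : Fin k) :
    (toricBeta μ k * toricAlpha ν k) a b
      = if a = b then μ k a * ν k a else 0 := by
  rw [Matrix.mul_apply]
  rw [Finset.sum_eq_single (Fin.castSucc a)]
  · by_cases hab : (a : ℕ) = (b : ℕ) <;> simp [toricBeta, toricAlpha, Fin.ext_iff, hab]
  · intro c _ hc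
    have : ¬ ((a : ℕ) = (c : ℕ)) := fun h => hc (Fin.ext (by simpa using h.symm))
    simp [toricBeta, this]
  · simp

lemma entryAB (μ ν : ℕ → ℕ → ℂ) (k : ℕ) (a b : Fin (k + 1)) :
    (toricAlpha ν k * toricBeta μ k) a b
      = if (a : ℕ) = (b : ℕ) ∧ (a : ℕ) < k then ν k a * μ k a else 0 := by
  rw [Matrix.mul_apply]
  by_cases ha : (a : ℕ) < k
  · rw [Finset.sum_eq_single (⟨(a : ℕ), ha⟩ : Fin k)]
    · by_cases hab : (a : ℕ) = (b : ℕ)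
      · simp [toricBeta, toricAlpha, hab, ha, hab ▸ ha]
      · simp [toricBeta, toricAlpha, hab, ha]
    · intro c _ hc
      have : ¬ ((a : ℕ) = (c : ℕ)) := fun h => hc (Fin.ext (by simpa using h.symm))
      simp [toricAlpha, this]
    · simp
  · rw [Finset.sum_eq_zero, if_neg (by tauto)]
    intro c _
    have : ¬ ((a : ℕ) = (c : ℕ)) := fun h => ha (h ▸ c.isLt)
    simp [toricAlpha, this]

/-- For a full-flag toric multiplicative quiver, the equations
`1 + β_{i+1} α_{i+1} = q_{i+1} (1 + α_i β_i)` for `0 ≤ i ≤ r-2` (note `α_0 β_0 = 0`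
automatically since `ℂ^0 = 0`) hold iff `μ_j^i ν_j^i = q_i q_{i-1} ⋯ q_j − 1`
for all `1 ≤ j ≤ i ≤ r-1` (here written with 0-indexed `j`). -/
theorem toric_quiver_equations_iff (r : ℕ) (hr : 2 ≤ r)
    (ν μ : ℕ → ℕ → ℂ) (q : ℕ → ℂ) :
    (∀ i, i ≤ r - 2 →
        (1 : Matrix (Fin (i + 1)) (Fin (i + 1)) ℂ)
            + toricBeta μ (i + 1) * toricAlpha ν (i + 1)
          = q (i + 1) • ((1 : Matrix (Fin (i + 1)) (Fin (i + 1)) ℂ)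
            + toricAlpha ν i * toricBeta μ i))
      ↔ (∀ i j, 1 ≤ i → i ≤ r - 1 → j < i →
          μ i j * ν i j = (∏ t ∈ Finset.Icc (j + 1) i, q t) - 1) := by
  have key : ∀ i : ℕ,
      ((1 : Matrix (Fin (i + 1)) (Fin (i + 1)) ℂ)
            + toricBeta μ (i + 1) * toricAlpha ν (i + 1)
          = q (i + 1) • ((1 : Matrix (Fin (i + 1)) (Fin (i + 1)) ℂ)
            + toricAlpha ν i * toricBeta μ i))
        ↔ ∀ j : Fin (i + 1),
          1 + μ (i + 1) j * ν (i + 1) j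
            = q (i + 1) * (1 + if (j : ℕ) < i then ν i j * μ i j else 0) := by
    intro i
    constructor
    · intro h j
      have h2 := congrFun (congrFun h j) j
      simpa [entryBA, entryAB, Matrix.add_apply, Matrix.one_apply,
        Matrix.smul_apply, smul_eq_mul] using h2
    · intro h
      ext a b
      by_cases hab : a = b
      · subst hab
        simpa [entryBA, entryAB, Matrix.add_apply, Matrix.one_apply,
          Matrix.smul_apply, smul_eq_mul] using h a
      · have hab' : ¬ ((a : ℕ) = (b : ℕ)) := fun h' => hab (Fin.ext h')
        simp [entryBA, entryAB, Matrix.add_apply, Matrix.one_apply,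
          Matrix.smul_apply, hab, hab']
  simp only [key]
  constructor
  · intro H i
    induction i with
    | zero => intro j h1; omega
    | succ m ih =>
      intro j _ hle hj
      have hm : m ≤ r - 2 := by omega
      have h := H m hm ⟨j, by omega⟩
      simp only at h
      have hprod : (∏ t ∈ Finset.Icc (j + 1) (m + 1), q t)
          = (∏ t ∈ Finset.Icc (j + 1) m, q t) * q (m + 1) :=
        Finset.prod_Icc_succ_top (by omega) q
      by_cases hjm : j < m
      · have hmu := ih j (by omega) (by omega) hjm
        rw [if_pos hjm] at h
        have : μ m j * ν m j = ν m j * μ m j := mul_comm _ _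
        rw [this] at hmu
        rw [hmu] at h
        rw [hprod]
        linear_combination h
      · have hjm' : j = m := by omega
        subst hjm'
        rw [if_neg hjm] at h
        have : (∏ t ∈ Finset.Icc (j + 1) (j + 1), q t) = q (j + 1) := by
          rw [Finset.Icc_self, Finset.prod_singleton]
        rw [this]
        linear_combination h
  · intro K i hi j
    have h1 := K (i + 1) (j : ℕ) (by omega) (by omega) j.isLt
    have hprod : (∏ t ∈ Finset.Icc ((j : ℕ) + 1) (i + 1), q t)
        = (∏ t ∈ Finset.Icc ((j : ℕ) + 1) i, q t) * q (i + 1) :=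
      Finset.prod_Icc_succ_top (by omega) q
    by_cases hjm : (j : ℕ) < i
    · have h2 := K i (j : ℕ) (by omega) (by omega) hjm
      rw [if_pos hjm, mul_comm (ν i j) (μ i j), h2]
      rw [hprod] at h1
      linear_combination h1
    · have hji : (j : ℕ) = i := by omega
      rw [if_neg hjm]
      have : (∏ t ∈ Finset.Icc ((j : ℕ) + 1) (i + 1), q t) = q (i + 1) := by
        rw [hji, Finset.Icc_self, Finset.prod_singleton]
      rw [this] at h1
      linear_combination h1
end

section
/- For a full-flag multiplicative quiver with β_i in the standard form β_i = (0 | I_{i×i}) for all i, the endomorphism Y = 1 + α_{n-1}β_{n-1} ∈ End(ℂ^n) is upper triangular with diagonal entries 1, q_{n-1}, q_{n-1}q_{n-2}, …, q_{n-1}q_{n-2}⋯q_1. -/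
/-- The standard form `β_i = (0 | I_{i×i})`, an `i × (i+1)` matrix whose first column
is zero and whose remaining columns form the identity. -/
def stdBeta (i : ℕ) : Matrix (Fin i) (Fin (i + 1)) ℂ :=
  fun a b => if (b : ℕ) = (a : ℕ) + 1 then 1 else 0

lemma mul_stdBeta_zero (k : ℕ) (M : Matrix (Fin (k + 1)) (Fin k) ℂ) (a : Fin (k + 1)) :
    (M * stdBeta k) a 0 = 0 := by
  rw [Matrix.mul_apply]
  apply Finset.sum_eq_zero
  intro c _
  simp [stdBeta]

lemma mul_stdBeta_succ (k : ℕ) (M : Matrix (Fin (k + 1)) (Fin k) ℂ) (a : Fin (k + 1))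
    (b : Fin k) : (M * stdBeta k) a b.succ = M a b := by
  rw [Matrix.mul_apply]
  rw [Finset.sum_eq_single b]
  · simp [stdBeta]
  · intro c _ hc
    have : ((b.succ : Fin (k + 1)) : ℕ) ≠ (c : ℕ) + 1 := by
      simp only [Fin.val_succ]
      exact fun h => hc (Fin.ext (Nat.succ_injective h)).symm
    simp only [stdBeta, Fin.val_succ, Nat.add_right_cancel_iff, mul_ite, mul_one,
      mul_zero, ite_eq_right_iff]
    exact fun h => absurd (Fin.ext h).symm hc
  · intro h
    exact absurd (Finset.mem_univ b) h

lemma stdBeta_mul (k : ℕ) (M : Matrix (Fin (k + 2)) (Fin (k + 1)) ℂ) (a b : Fin (k + 1)) :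
    (stdBeta (k + 1) * M) a b = M a.succ b := by
  rw [Matrix.mul_apply]
  rw [Finset.sum_eq_single a.succ]
  · simp [stdBeta]
  · intro c _ hc
    have : (c : ℕ) ≠ (a : ℕ) + 1 := by
      intro h
      exact hc (Fin.ext (by simpa using h))
    simp [stdBeta, this]
  · intro h
    exact absurd (Finset.mem_univ a.succ) h

lemma stdForm_aux (m : ℕ) (α : ∀ i : ℕ, Matrix (Fin (i + 1)) (Fin i) ℂ) (q : ℕ → ℂ)
    (heq : ∀ i, i < m →
      (1 : Matrix (Fin (i + 1)) (Fin (i + 1)) ℂ) + stdBeta (i + 1) * α (i + 1)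
        = q (i + 1) • ((1 : Matrix (Fin (i + 1)) (Fin (i + 1)) ℂ) + α i * stdBeta i)) :
    (∀ a b : Fin (m + 1), (b : ℕ) < (a : ℕ) →
      ((1 : Matrix (Fin (m + 1)) (Fin (m + 1)) ℂ) + α m * stdBeta m) a b = 0) ∧
    (∀ i : Fin (m + 1),
      ((1 : Matrix (Fin (m + 1)) (Fin (m + 1)) ℂ) + α m * stdBeta m) i i
        = ∏ t ∈ Finset.Icc (m - (i : ℕ) + 1) m, q t) := by
  induction m with
  | zero =>
    refine ⟨?_, ?_⟩
    · intro a b hb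
      have ha := a.isLt
      have hb' := b.isLt
      omega
    · intro i
      have hi : i = 0 := Fin.fin_one_eq_zero i
      subst hi
      have h0 : (α 0 * stdBeta 0) 0 0 = 0 := by
        rw [Matrix.mul_apply]
        exact Finset.sum_of_isEmpty _
      simp [Matrix.add_apply, h0, Matrix.one_apply]
  | succ m ih =>
    have ih' := ih (fun i hi => heq i (Nat.lt_succ_of_lt hi))
    have hkey : ∀ a b : Fin (m + 1),
        ((1 : Matrix (Fin (m + 2)) (Fin (m + 2)) ℂ) + α (m + 1) * stdBeta (m + 1)) a.succ b.succ
          = q (m + 1) * ((1 : Matrix (Fin (m + 1)) (Fin (m + 1)) ℂ) + α m * stdBeta m) a b := by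
      intro a b
      have h := congrFun (congrFun (heq m (Nat.lt_succ_self m)) a) b
      rw [Matrix.smul_apply, Matrix.add_apply, stdBeta_mul] at h
      have hone : (1 : Matrix (Fin (m + 2)) (Fin (m + 2)) ℂ) a.succ b.succ
          = (1 : Matrix (Fin (m + 1)) (Fin (m + 1)) ℂ) a b := by
        simp [Matrix.one_apply, Fin.succ_inj]
      rw [Matrix.add_apply, mul_stdBeta_succ, hone, h, smul_eq_mul]
    have hcol : ∀ a : Fin (m + 2),
        ((1 : Matrix (Fin (m + 2)) (Fin (m + 2)) ℂ) + α (m + 1) * stdBeta (m + 1)) a 0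
          = if a = 0 then 1 else 0 := by
      intro a
      rw [Matrix.add_apply, mul_stdBeta_zero, Matrix.one_apply]
      simp
    constructor
    · intro a b hb
      induction b using Fin.cases with
      | zero =>
        rw [hcol]
        have : a ≠ 0 := by
          intro h; subst h; simp at hb
        simp [this]
      | succ b =>
        induction a using Fin.cases with
        | zero => simp at hb
        | succ a =>
          rw [hkey a b, ih'.1 a b (by simpa using Nat.lt_of_succ_lt_succ hb)]
          ring
    · intro i
      induction i using Fin.cases with
      | zero =>
        have : Finset.Icc (m + 1 - (0 : ℕ) + 1) (m + 1) = ∅ := by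
          apply Finset.Icc_eq_empty
          omega
        rw [hcol]
        simp [this]
      | succ j =>
        rw [hkey j j, ih'.2 j]
        have hj : (j : ℕ) ≤ m := Nat.lt_succ_iff.mp j.isLt
        have h1 : m + 1 - ((j.succ : Fin (m + 2)) : ℕ) + 1 = m - (j : ℕ) + 1 := by
          simp only [Fin.val_succ]; omega
        rw [h1, Finset.prod_Icc_succ_top (by omega)]
        ring

/-- Full-flag multiplicative quiver with `n = m + 1`: if every `β_i` is in the standard
form `(0 | I)` and the equations `1 + β_{i+1} α_{i+1} = q_{i+1}(1 + α_i β_i)` hold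
(for `0 ≤ i ≤ n - 2`, with `α_0 β_0 = 0` automatic since `ℂ^0 = 0`), then
`Y = 1 + α_{n-1} β_{n-1}` is upper triangular with diagonal entries
`1, q_{n-1}, q_{n-1} q_{n-2}, …, q_{n-1} ⋯ q_1`. -/
theorem stdForm_Y_triangular (m : ℕ) (hm : 1 ≤ m)
    (α : ∀ i : ℕ, Matrix (Fin (i + 1)) (Fin i) ℂ) (q : ℕ → ℂ) (hq : ∀ i, q i ≠ 0)
    (heq : ∀ i, i ≤ m - 1 →
      (1 : Matrix (Fin (i + 1)) (Fin (i + 1)) ℂ) + stdBeta (i + 1) * α (i + 1)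
        = q (i + 1) • ((1 : Matrix (Fin (i + 1)) (Fin (i + 1)) ℂ) + α i * stdBeta i)) :
    (((1 : Matrix (Fin (m + 1)) (Fin (m + 1)) ℂ) + α m * stdBeta m).BlockTriangular id) ∧
    (∀ i : Fin (m + 1),
      ((1 : Matrix (Fin (m + 1)) (Fin (m + 1)) ℂ) + α m * stdBeta m) i i
        = ∏ t ∈ Finset.Icc (m - (i : ℕ) + 1) m, q t) := by
  have haux := stdForm_aux m α q (fun i hi => heq i (by omega))
  exact ⟨fun i j hij => haux.1 i j (by exact_mod_cast hij), haux.2⟩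
end

section
/- Define Φ : SL(2,ℂ) × B → ℂ^5 by Φ(u,v) = (a, c, e, X, Y) where u = (a b; c d), v = (e f; 0 e'), X = e(af + (e'−e)b), Y = e(cf + (e'−e)d). Then the image of Φ is contained in the quadric {(a, c, e, X, Y) ∈ ℂ^5 : cX − aY = e² − 1, e ≠ 0}, and Φ is invariant under the right N-action (u,v) ↦ (u g^{-1}, g v g^{-1}). -/
open Matrix

/-- The invariant map `Φ(u, v) = (a, c, e, X, Y)` where `u = (a b; c d)`,
`v = (e f; 0 e')`, `X = e(a f + (e' − e) b)`, `Y = e(c f + (e' − e) d)`. -/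
def PhiMap (u v : Matrix (Fin 2) (Fin 2) ℂ) : ℂ × ℂ × ℂ × ℂ × ℂ :=
  (u 0 0, u 1 0, v 0 0,
    v 0 0 * (u 0 0 * v 0 1 + (v 1 1 - v 0 0) * u 0 1),
    v 0 0 * (u 1 0 * v 0 1 + (v 1 1 - v 0 0) * u 1 1))

lemma inv_unip (t : ℂ) : (!![1, t; 0, 1])⁻¹ = !![1, -t; 0, 1] := by
  apply inv_eq_right_inv
  ext i j
  fin_cases i <;> fin_cases j <;>
    simp [Matrix.mul_apply, Fin.sum_univ_two]

/-- The image of `Φ : SL(2,ℂ) × B → ℂ⁵` is contained in the quadric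
`{(a,c,e,X,Y) : cX − aY = e² − 1, e ≠ 0}`, and `Φ` is invariant under the right
`N`-action `(u,v) ↦ (u g⁻¹, g v g⁻¹)`. -/
theorem Phi_image_and_invariance
    (u v : Matrix (Fin 2) (Fin 2) ℂ)
    (hu : u.det = 1) (hv10 : v 1 0 = 0) (hv : v.det = 1) :
    ((PhiMap u v).2.1 * (PhiMap u v).2.2.2.1 - (PhiMap u v).1 * (PhiMap u v).2.2.2.2
        = (PhiMap u v).2.2.1 ^ 2 - 1 ∧ (PhiMap u v).2.2.1 ≠ 0) ∧
    (∀ t : ℂ,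
      PhiMap (u * (!![1, t; 0, 1])⁻¹) (!![1, t; 0, 1] * v * (!![1, t; 0, 1])⁻¹)
        = PhiMap u v) := by
  rw [Matrix.det_fin_two] at hu hv
  rw [hv10, mul_zero, sub_zero] at hv
  refine ⟨⟨?_, ?_⟩, ?_⟩
  · simp only [PhiMap]
    linear_combination (v 0 0 * (v 0 0 - v 1 1)) * hu - hv
  · intro h
    simp only [PhiMap] at h
    rw [h, zero_mul] at hv
    exact one_ne_zero hv.symm
  · intro t
    rw [inv_unip]
    simp only [PhiMap, Matrix.mul_apply, Fin.sum_univ_two, Matrix.cons_val',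
      Matrix.cons_val_zero, Matrix.cons_val_one, Matrix.head_cons, Matrix.empty_val',
      Matrix.cons_val_fin_one, Matrix.head_fin_const]
    refine Prod.ext ?_ (Prod.ext ?_ (Prod.ext ?_ (Prod.ext ?_ ?_))) <;>
      simp [hv10] <;> first | ring1 | exact Or.inl (by ring1)
end
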